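/- Let {α_{i,j} : i < n, j < m} be algebraically independent elements over 𝔽_p in a field 𝕂 of characteristic p, and for each η = (i_0,…,i_{n-1}) ∈ m^n set a_η = Π_{l<n} α_{l, i_l}. Then the family {1/a_η : η ∈ m^n} is linearly independent over 𝔽_p. -/

import Mathlib

/-- Let `{α_{i,j} : i < n, j < m}` be elements of a field `𝕂` of characteristic `p` that are
algebraically independent over `𝔽_p`, and for `η ∈ m^n` set `a_η = Π_{l<n} α_{l, η(l)}`.
Then the family `{1/a_η : η ∈ m^n}` is linearly independent over `𝔽_p`.
(The `Algebra (ZMod p) 𝕂` structure is unique by `CharP 𝕂 p`.) -/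
theorem grid_product_inverses_linearly_independent
    {𝕂 : Type*} [Field 𝕂] (p : ℕ) [Fact p.Prime] [CharP 𝕂 p]
    [Algebra (ZMod p) 𝕂]
    (n m : ℕ) (α : Fin n → Fin m → 𝕂)
    (hα : AlgebraicIndependent (ZMod p) (fun q : Fin n × Fin m => α q.1 q.2)) :
    LinearIndependent (ZMod p) (fun η : Fin n → Fin m => (∏ l : Fin n, α l (η l))⁻¹) := by
  classical
  have hinj : Function.Injective
      (MvPolynomial.aeval (fun q : Fin n × Fin m => α q.1 q.2) :
        MvPolynomial (Fin n × Fin m) (ZMod p) →ₐ[ZMod p] 𝕂) := hα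
  -- each α is nonzero
  have hne : ∀ q : Fin n × Fin m, α q.1 q.2 ≠ 0 := by
    intro q hq
    have : (MvPolynomial.X q : MvPolynomial (Fin n × Fin m) (ZMod p)) = 0 := by
      apply hinj
      simp [hq]
    exact MvPolynomial.X_ne_zero q this
  -- exponent vectors
  set d : (Fin n → Fin m) → (Fin n × Fin m) →₀ ℕ :=
    fun η => Finsupp.equivFunOnFinite.symm
      (fun q : Fin n × Fin m => if η q.1 = q.2 then 0 else 1) with hd
  have hdinj : Function.Injective d := by
    intro η η' h
    funext l
    by_contra hl
    have := congrArg (fun f : (Fin n × Fin m) →₀ ℕ => f (l, η l)) h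
    simp only [hd, Finsupp.coe_equivFunOnFinite_symm] at this
    have h1 : η' l ≠ η l := fun h => hl h.symm
    simp [h1] at this
  -- monomials are linearly independent
  have hmon : LinearIndependent (ZMod p)
      (fun η : Fin n → Fin m =>
        (MvPolynomial.monomial (d η) (1 : ZMod p) :
          MvPolynomial (Fin n × Fin m) (ZMod p))) := by
    have hb := (MvPolynomial.basisMonomials (Fin n × Fin m) (ZMod p)).linearIndependent
    have := hb.comp d hdinj
    rw [MvPolynomial.coe_basisMonomials] at this
    exact this
  -- map through aeval
  have hK : LinearIndependent (ZMod p)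
      (fun η : Fin n → Fin m =>
        (MvPolynomial.aeval (fun q : Fin n × Fin m => α q.1 q.2))
          (MvPolynomial.monomial (d η) (1 : ZMod p))) := by
    have := hmon.map' (MvPolynomial.aeval
        (fun q : Fin n × Fin m => α q.1 q.2)).toLinearMap
      (LinearMap.ker_eq_bot.mpr hinj)
    exact this
  -- multiply by the fixed nonzero constant (∏ all α)⁻¹
  set c : 𝕂 := (∏ q : Fin n × Fin m, α q.1 q.2)⁻¹ with hc
  have hc0 : c ≠ 0 := by
    simp only [hc, ne_eq, inv_eq_zero]
    exact Finset.prod_ne_zero_iff.mpr (fun q _ => hne q)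
  have hfinal := hK.map' (LinearMap.mulLeft (ZMod p) c)
    (LinearMap.ker_eq_bot.mpr (mul_right_injective₀ hc0))
  convert hfinal using 1
  funext η
  simp only [Function.comp_apply, LinearMap.mulLeft_apply]
  -- compute aeval of the monomial
  have haev : (MvPolynomial.aeval (fun q : Fin n × Fin m => α q.1 q.2))
      (MvPolynomial.monomial (d η) (1 : ZMod p))
      = ∏ q : Fin n × Fin m, α q.1 q.2 ^ (if η q.1 = q.2 then 0 else 1) := by
    rw [MvPolynomial.aeval_monomial, map_one, one_mul]
    rw [Finsupp.prod_fintype _ _ (fun q => pow_zero _)]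
    simp [hd]
  rw [haev]
  -- split the full product
  have hsplit : (∏ q : Fin n × Fin m, α q.1 q.2)
      = (∏ q : Fin n × Fin m, α q.1 q.2 ^ (if η q.1 = q.2 then 1 else 0)) *
        (∏ q : Fin n × Fin m, α q.1 q.2 ^ (if η q.1 = q.2 then 0 else 1)) := by
    rw [← Finset.prod_mul_distrib]
    apply Finset.prod_congr rfl
    intro q _
    by_cases h : η q.1 = q.2 <;> simp [h]
  have hP : (∏ q : Fin n × Fin m, α q.1 q.2 ^ (if η q.1 = q.2 then 1 else 0))
      = ∏ l : Fin n, α l (η l) := by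
    rw [Fintype.prod_prod_type]
    apply Finset.prod_congr rfl
    intro l _
    have : (∏ j : Fin m, α l j ^ (if η l = j then 1 else 0))
        = ∏ j : Fin m, (if η l = j then α l j else 1) := by
      apply Finset.prod_congr rfl
      intro j _
      by_cases h : η l = j <;> simp [h]
    rw [this, Finset.prod_ite_eq]
    simp
  have hB0 : (∏ q : Fin n × Fin m, α q.1 q.2 ^ (if η q.1 = q.2 then 0 else 1)) ≠ 0 :=
    Finset.prod_ne_zero_iff.mpr (fun q _ => pow_ne_zero _ (hne q))
  have hP0 : (∏ l : Fin n, α l (η l)) ≠ 0 :=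
    Finset.prod_ne_zero_iff.mpr (fun l _ => hne (l, η l))
  rw [hc, hsplit, hP, mul_inv, mul_assoc, inv_mul_cancel₀ hB0, mul_one]
  all_goals rfl
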